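/- Let X, Y, P be real Banach spaces, F : X × P ⇒ Y and G : X ⇒ Y multifunctions and (x̄,p̄,ȳ) ∈ X × P × Y with ȳ ∈ F(x̄,p̄) and −ȳ ∈ G(x̄). Let S : P ⇒ X be defined by S(p) = {x ∈ X : 0 ∈ F(x,p) + G(x)}. Assume: (i) (F,G) is locally sum-stable around (x̄,p̄,ȳ,−ȳ); (ii) F, as a multifunction of (x,p), is inner semicontinuous at ((x̄,p̄),ȳ); (iii) F is Lipschitz-like with respect to x uniformly in p around ((x̄,p̄),ȳ) with constant l > 0; (iv) F is metrically regular with respect to p uniformly in x around ((x̄,p̄),ȳ) with constant k > 0; (v) G is Lipschitz-like around (x̄,−ȳ) with constant m > 0. Then S is metrically regular around (p̄,x̄); more precisely, for every κ > k·(l + m), S is metrically regular around (p̄,x̄) with constant κ. -/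

import Mathlib

open Metric Set Filter Topology Pointwise

/-- The pair `(F, G)` is locally sum-stable around `(xb, pb, yb, zb)`. -/
def LocSumStableP {X P Y : Type*} [NormedAddCommGroup X] [NormedAddCommGroup P]
    [NormedAddCommGroup Y] (F : X × P → Set Y) (G : X → Set Y)
    (xb : X) (pb : P) (yb zb : Y) : Prop :=
  ∀ ε > (0 : ℝ), ∃ δ > (0 : ℝ), ∀ x ∈ ball xb δ, ∀ p ∈ ball pb δ,
    ∀ w ∈ (F (x, p) + G x) ∩ ball (yb + zb) δ,
      ∃ y ∈ F (x, p) ∩ ball yb ε, ∃ z ∈ G x ∩ ball zb ε, w = y + z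

/-- Inner semicontinuity of a multifunction `H : α ⇒ Y` at `(a, y)`. -/
def InnerSemicontinuousAt {α Y : Type*} [TopologicalSpace α] [TopologicalSpace Y]
    (H : α → Set Y) (a : α) (y : Y) : Prop :=
  ∀ D : Set Y, IsOpen D → y ∈ D → ∃ U ∈ 𝓝 a, ∀ b ∈ U, (H b ∩ D).Nonempty

/-- `F : X × P ⇒ Y` is Lipschitz-like with respect to `x` uniformly in `p`
around `((xb, pb), yb)` with constant `l`. -/
def LipschitzLikeWrtXUnifP {X P Y : Type*} [NormedAddCommGroup X]
    [NormedAddCommGroup P] [NormedAddCommGroup Y] (F : X × P → Set Y)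
    (xb : X) (pb : P) (yb : Y) (l : ℝ) : Prop :=
  ∃ U ∈ 𝓝 xb, ∃ V ∈ 𝓝 pb, ∃ W ∈ 𝓝 yb, ∀ p ∈ V, ∀ x ∈ U, ∀ u ∈ U,
    F (x, p) ∩ W ⊆ F (u, p) + closedBall (0 : Y) (l * ‖x - u‖)

/-- `F : X × P ⇒ Y` is metrically regular with respect to `p` uniformly in `x`
around `((xb, pb), yb)` with constant `k`. -/
def MetRegWrtPUnifX {X P Y : Type*} [NormedAddCommGroup X] [NormedAddCommGroup P]
    [NormedAddCommGroup Y] (F : X × P → Set Y)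
    (xb : X) (pb : P) (yb : Y) (k : ℝ) : Prop :=
  ∃ U ∈ 𝓝 xb, ∃ V ∈ 𝓝 pb, ∃ W ∈ 𝓝 yb, ∀ x ∈ U, ∀ p ∈ V, ∀ y ∈ W,
    EMetric.infEdist p {q : P | y ∈ F (x, q)} ≤
      ENNReal.ofReal k * EMetric.infEdist y (F (x, p))

/-- `G : X ⇒ Y` is Lipschitz-like around `(xb, zb)` with constant `m`. -/
def LipschitzLikeAround {X Y : Type*} [NormedAddCommGroup X] [NormedAddCommGroup Y]
    (G : X → Set Y) (xb : X) (zb : Y) (m : ℝ) : Prop :=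
  ∃ U ∈ 𝓝 xb, ∃ V ∈ 𝓝 zb, ∀ x ∈ U, ∀ u ∈ U,
    G x ∩ V ⊆ G u + closedBall (0 : Y) (m * ‖x - u‖)

/-- `S : P ⇒ X` is metrically regular around `(pb, xb)` with constant `κ`. -/
def MetricallyRegularAround {P X : Type*} [NormedAddCommGroup P]
    [NormedAddCommGroup X] (S : P → Set X) (pb : P) (xb : X) (κ : ℝ) : Prop :=
  ∃ V ∈ 𝓝 pb, ∃ U ∈ 𝓝 xb, ∀ p ∈ V, ∀ x ∈ U,
    EMetric.infEdist p {q | x ∈ S q} ≤ ENNReal.ofReal κ * EMetric.infEdist x (S p)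

/-- metric regularity of the solution map of the variational system
`0 ∈ F(x,p) + G(x)`. -/
theorem stmt13 {X Y P : Type*}
    [NormedAddCommGroup X] [NormedSpace ℝ X] [CompleteSpace X]
    [NormedAddCommGroup Y] [NormedSpace ℝ Y] [CompleteSpace Y]
    [NormedAddCommGroup P] [NormedSpace ℝ P] [CompleteSpace P]
    (F : X × P → Set Y) (G : X → Set Y) (xb : X) (pb : P) (yb : Y)
    (hybF : yb ∈ F (xb, pb)) (hybG : -yb ∈ G xb)
    (S : P → Set X) (hS : ∀ p, S p = {x : X | (0 : Y) ∈ F (x, p) + G x})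
    (hsum : LocSumStableP F G xb pb yb (-yb))
    (hisc : InnerSemicontinuousAt F (xb, pb) yb)
    (l : ℝ) (hl : 0 < l) (hFlip : LipschitzLikeWrtXUnifP F xb pb yb l)
    (k : ℝ) (hk : 0 < k) (hFreg : MetRegWrtPUnifX F xb pb yb k)
    (m : ℝ) (hm : 0 < m) (hGlip : LipschitzLikeAround G xb (-yb) m) :
    ∀ κ : ℝ, k * (l + m) < κ → MetricallyRegularAround S pb xb κ := by
  intro κ hκ
  have hlm : 0 < k * (l + m) := by positivity
  have hκ0 : 0 < κ := lt_trans hlm hκ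
  have hκkm : k * m < κ := by nlinarith
  obtain ⟨UL, hUL, VL, hVL, WL, hWL, hL⟩ := hFlip
  obtain ⟨UR, hUR, VR, hVR, WR, hWR, hR⟩ := hFreg
  obtain ⟨UG, hUG, VG, hVG, hG⟩ := hGlip
  obtain ⟨ρ1, hρ1, hρ1s⟩ := Metric.mem_nhds_iff.mp hUL
  obtain ⟨ρ2, hρ2, hρ2s⟩ := Metric.mem_nhds_iff.mp hUR
  obtain ⟨ρ3, hρ3, hρ3s⟩ := Metric.mem_nhds_iff.mp hUG
  obtain ⟨ρ4, hρ4, hρ4s⟩ := Metric.mem_nhds_iff.mp hVL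
  obtain ⟨ρ5, hρ5, hρ5s⟩ := Metric.mem_nhds_iff.mp hVR
  obtain ⟨ρ6, hρ6, hρ6s⟩ := Metric.mem_nhds_iff.mp hWL
  obtain ⟨ρ7, hρ7, hρ7s⟩ := Metric.mem_nhds_iff.mp hWR
  obtain ⟨ρ8, hρ8, hρ8s⟩ := Metric.mem_nhds_iff.mp hVG
  set ρ : ℝ := min (min (min ρ1 ρ2) (min ρ3 ρ4)) (min (min ρ5 ρ6) (min ρ7 ρ8)) with hρ_def
  have hρ : 0 < ρ := by
    simp only [hρ_def, lt_min_iff]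
    exact ⟨⟨⟨hρ1, hρ2⟩, hρ3, hρ4⟩, ⟨hρ5, hρ6⟩, hρ7, hρ8⟩
  have hρ1' : ρ ≤ ρ1 := le_trans (min_le_left _ _) (le_trans (min_le_left _ _) (min_le_left _ _))
  have hρ2' : ρ ≤ ρ2 := le_trans (min_le_left _ _) (le_trans (min_le_left _ _) (min_le_right _ _))
  have hρ3' : ρ ≤ ρ3 := le_trans (min_le_left _ _) (le_trans (min_le_right _ _) (min_le_left _ _))
  have hρ4' : ρ ≤ ρ4 := le_trans (min_le_left _ _) (le_trans (min_le_right _ _) (min_le_right _ _))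
  have hρ5' : ρ ≤ ρ5 := le_trans (min_le_right _ _) (le_trans (min_le_left _ _) (min_le_left _ _))
  have hρ6' : ρ ≤ ρ6 := le_trans (min_le_right _ _) (le_trans (min_le_left _ _) (min_le_right _ _))
  have hρ7' : ρ ≤ ρ7 := le_trans (min_le_right _ _) (le_trans (min_le_right _ _) (min_le_left _ _))
  have hρ8' : ρ ≤ ρ8 := le_trans (min_le_right _ _) (le_trans (min_le_right _ _) (min_le_right _ _))
  have hbUL : ball xb ρ ⊆ UL := (ball_subset_ball hρ1').trans hρ1s
  have hbUR : ball xb ρ ⊆ UR := (ball_subset_ball hρ2').trans hρ2s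
  have hbUG : ball xb ρ ⊆ UG := (ball_subset_ball hρ3').trans hρ3s
  have hbVL : ball pb ρ ⊆ VL := (ball_subset_ball hρ4').trans hρ4s
  have hbVR : ball pb ρ ⊆ VR := (ball_subset_ball hρ5').trans hρ5s
  have hbWL : ball yb ρ ⊆ WL := (ball_subset_ball hρ6').trans hρ6s
  have hbWR : ball yb ρ ⊆ WR := (ball_subset_ball hρ7').trans hρ7s
  have hbVG : ball (-yb) ρ ⊆ VG := (ball_subset_ball hρ8').trans hρ8s
  obtain ⟨δs, hδs, hsumP⟩ := hsum (ρ / 2) (by positivity)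
  set r : ℝ := min (δs / 2) (min (ρ / 2) (ρ / (2 * m))) with hr_def
  have hr : 0 < r := by
    simp only [hr_def, lt_min_iff]
    exact ⟨by positivity, by positivity, by positivity⟩
  have hr_δs : 2 * r ≤ δs := by
    have := min_le_left (δs / 2) (min (ρ / 2) (ρ / (2 * m)))
    rw [← hr_def] at this; linarith
  have hr_ρ : r ≤ ρ / 2 := le_trans (min_le_right _ _) (min_le_left _ _)
  have hr_m : m * r ≤ ρ / 2 := by
    have h1 : r ≤ ρ / (2 * m) := le_trans (min_le_right _ _) (min_le_right _ _)
    have := mul_le_mul_of_nonneg_left h1 hm.le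
    calc m * r ≤ m * (ρ / (2 * m)) := this
      _ = ρ / 2 := by field_simp
  set ε₁ : ℝ := (κ - k * m) * r / (2 * k) with hε₁_def
  have hε₁ : 0 < ε₁ := by
    apply div_pos (mul_pos (by linarith) hr) (by positivity)
  have harith : k * (m * r + ε₁) ≤ κ * r := by
    rw [hε₁_def]
    have : k * ((κ - k * m) * r / (2 * k)) = (κ - k * m) * r / 2 := by
      field_simp
    nlinarith [mul_pos (sub_pos.mpr hκkm) hr]
  obtain ⟨Ui, hUi, hiscP⟩ := hisc (ball yb ε₁) isOpen_ball (mem_ball_self hε₁)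
  obtain ⟨ri, hri, hris⟩ := Metric.mem_nhds_iff.mp hUi
  set a : ℝ := min r ri with ha_def
  have ha : 0 < a := lt_min hr hri
  have har : a ≤ r := min_le_left _ _
  set b : ℝ := min (min r ri) ρ with hb_def
  have hb : 0 < b := lt_min (lt_min hr hri) hρ
  have hbr : b ≤ r := le_trans (min_le_left _ _) (min_le_left _ _)
  have hbρ : b ≤ ρ := min_le_right _ _
  refine ⟨ball pb b, ball_mem_nhds _ hb, ball xb a, ball_mem_nhds _ ha, ?_⟩
  intro p hp x hx
  have hp_ρ : p ∈ ball pb ρ := ball_subset_ball hbρ hp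
  have hx_ρ : x ∈ ball xb ρ := ball_subset_ball (har.trans (hr_ρ.trans (by linarith))) hx
  have hpVL : p ∈ VL := hbVL hp_ρ
  have hpVR : p ∈ VR := hbVR hp_ρ
  have hxUL : x ∈ UL := hbUL hx_ρ
  have hxUR : x ∈ UR := hbUR hx_ρ
  have hxUG : x ∈ UG := hbUG hx_ρ
  -- key subset fact
  have hsub : ∀ z' : Y, z' ∈ G x → {q : P | -z' ∈ F (x, q)} ⊆ {q : P | x ∈ S q} := by
    intro z' hz' q hq
    simp only [mem_setOf_eq] at hq ⊢
    rw [hS q]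
    simp only [mem_setOf_eq]
    rw [Set.mem_add]
    exact ⟨-z', hq, z', hz', neg_add_cancel z'⟩
  by_cases hcase : EMetric.infEdist x (S p) < ENNReal.ofReal r
  · -- Case 2: d(x, S p) < r
    have hItop : EMetric.infEdist x (S p) ≠ ⊤ := ne_top_of_lt hcase
    apply ENNReal.le_of_forall_pos_le_add
    intro ε' hε' _hfin
    set η : ENNReal := (ε' : ENNReal) / ENNReal.ofReal κ with hη_def
    have hη0 : η ≠ 0 := by
      rw [hη_def, Ne, ENNReal.div_eq_zero_iff]
      push_neg
      exact ⟨ENNReal.coe_ne_zero.mpr hε'.ne', ENNReal.ofReal_ne_top⟩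
    have hlt : EMetric.infEdist x (S p) <
        min (ENNReal.ofReal r) (EMetric.infEdist x (S p) + η) :=
      lt_min hcase (ENNReal.lt_add_right hItop hη0)
    obtain ⟨u, huS, hue⟩ := EMetric.infEdist_lt_iff.mp hlt
    have hue_r : edist x u < ENNReal.ofReal r := hue.trans_le (min_le_left _ _)
    have hue_I : edist x u < EMetric.infEdist x (S p) + η := hue.trans_le (min_le_right _ _)
    have hdxu : dist x u < r := by rwa [edist_lt_ofReal] at hue_r
    have huxb : dist u xb < 2 * r := by
      have h1 : dist x xb < a := mem_ball.mp hx
      calc dist u xb ≤ dist u x + dist x xb := dist_triangle _ _ _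
        _ < r + r := by
            rw [dist_comm u x]
            exact add_lt_add hdxu (lt_of_lt_of_le h1 har)
        _ = 2 * r := by ring
    have hu_ρ : u ∈ ball xb ρ := by rw [mem_ball]; linarith
    have huUL : u ∈ UL := hbUL hu_ρ
    have huUG : u ∈ UG := hbUG hu_ρ
    have hu_δ : u ∈ ball xb δs := by rw [mem_ball]; linarith
    have hp_δ : p ∈ ball pb δs := by
      rw [mem_ball]
      have h1 : dist p pb < b := mem_ball.mp hp
      linarith
    have h0F : (0 : Y) ∈ F (u, p) + G u := by
      have := huS; rw [hS p] at this; exact this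
    obtain ⟨y, ⟨hyF, hyb⟩, z, ⟨hzG, hzb⟩, h0yz⟩ :=
      hsumP u hu_δ p hp_δ 0 ⟨h0F, by simp only [add_neg_cancel]; exact mem_ball_self hδs⟩
    have hyWL : y ∈ WL := hbWL (ball_subset_ball (by linarith) hyb)
    obtain ⟨y', hy'F, b₁, hb₁, hyeq⟩ := Set.mem_add.mp (hL p hpVL u huUL x hxUL ⟨hyF, hyWL⟩)
    rw [mem_closedBall_zero_iff] at hb₁
    have hzVG : z ∈ VG := hbVG (ball_subset_ball (by linarith) hzb)
    obtain ⟨z', hz'G, b₂, hb₂, hzeq⟩ := Set.mem_add.mp (hG u huUG x hxUG ⟨hzG, hzVG⟩)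
    rw [mem_closedBall_zero_iff] at hb₂
    have hux : ‖u - x‖ < r := by rw [← dist_eq_norm, dist_comm]; exact hdxu
    have hux0 : 0 ≤ ‖u - x‖ := norm_nonneg _
    have heq : y' + z' = -(b₁ + b₂) := by
      have h2 : y' + z' + (b₁ + b₂) = 0 := by
        have h3 : y' + z' + (b₁ + b₂) = (y' + b₁) + (z' + b₂) := by abel
        rw [h3, hyeq, hzeq, ← h0yz]
      exact eq_neg_of_add_eq_zero_left h2
    have hyz' : ‖y' + z'‖ ≤ (l + m) * ‖u - x‖ := by
      rw [heq, norm_neg]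
      calc ‖b₁ + b₂‖ ≤ ‖b₁‖ + ‖b₂‖ := norm_add_le _ _
        _ ≤ l * ‖u - x‖ + m * ‖u - x‖ := add_le_add hb₁ hb₂
        _ = (l + m) * ‖u - x‖ := by ring
    have hzWR : -z' ∈ WR := by
      apply hbWR
      rw [mem_ball, dist_eq_norm]
      have h3 : -z' - yb = b₂ - (z - -yb) := by rw [← hzeq]; abel
      rw [h3]
      have h4 : ‖z - -yb‖ < ρ / 2 := by rw [← dist_eq_norm]; exact mem_ball.mp hzb
      have h5 : ‖b₂ - (z - -yb)‖ ≤ ‖b₂‖ + ‖z - -yb‖ := norm_sub_le _ _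
      have h6 : m * ‖u - x‖ < m * r := mul_lt_mul_of_pos_left hux hm
      linarith
    have hreg := hR x hxUR p hpVR (-z') hzWR
    have hd : EMetric.infEdist (-z') (F (x, p)) ≤ ENNReal.ofReal ((l + m) * ‖u - x‖) := by
      calc EMetric.infEdist (-z') (F (x, p)) ≤ edist (-z') y' :=
            EMetric.infEdist_le_edist_of_mem hy'F
        _ = ENNReal.ofReal ‖-z' - y'‖ := by rw [edist_dist, dist_eq_norm]
        _ ≤ ENNReal.ofReal ((l + m) * ‖u - x‖) := by
            apply ENNReal.ofReal_le_ofReal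
            have h7 : -z' - y' = -(y' + z') := by abel
            rw [h7, norm_neg]
            exact hyz'
    have hedist : ENNReal.ofReal ‖u - x‖ = edist x u := by
      rw [edist_dist, dist_eq_norm, norm_sub_rev]
    calc EMetric.infEdist p {q | x ∈ S q}
        ≤ EMetric.infEdist p {q : P | -z' ∈ F (x, q)} :=
          EMetric.infEdist_anti (hsub z' hz'G)
      _ ≤ ENNReal.ofReal k * EMetric.infEdist (-z') (F (x, p)) := hreg
      _ ≤ ENNReal.ofReal k * ENNReal.ofReal ((l + m) * ‖u - x‖) := mul_le_mul_right hd _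
      _ = ENNReal.ofReal (k * ((l + m) * ‖u - x‖)) := (ENNReal.ofReal_mul hk.le).symm
      _ ≤ ENNReal.ofReal (κ * ‖u - x‖) := ENNReal.ofReal_le_ofReal (by rw [← mul_assoc]; exact mul_le_mul_of_nonneg_right hκ.le hux0)
      _ = ENNReal.ofReal κ * ENNReal.ofReal ‖u - x‖ := ENNReal.ofReal_mul hκ0.le
      _ = ENNReal.ofReal κ * edist x u := by rw [hedist]
      _ ≤ ENNReal.ofReal κ * (EMetric.infEdist x (S p) + η) := mul_le_mul_right hue_I.le _
      _ = ENNReal.ofReal κ * EMetric.infEdist x (S p) + ENNReal.ofReal κ * η := mul_add _ _ _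
      _ ≤ ENNReal.ofReal κ * EMetric.infEdist x (S p) + ε' := by
          apply add_le_add_right
          rw [hη_def]
          exact ENNReal.mul_div_le
  · -- Case 1: d(x, S p) ≥ r
    rw [not_lt] at hcase
    obtain ⟨y, hy⟩ := hiscP (x, p) (hris (by
      rw [mem_ball, Prod.dist_eq]
      exact max_lt (lt_of_lt_of_le (mem_ball.mp hx) (min_le_right _ _))
        (lt_of_lt_of_le (mem_ball.mp hp) (le_trans (min_le_left _ _) (min_le_right _ _)))))
    obtain ⟨hyF, hyb⟩ := hy
    have hmem : -yb ∈ G xb ∩ VG := ⟨hybG, mem_of_mem_nhds hVG⟩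
    have hxbUG : xb ∈ UG := mem_of_mem_nhds hUG
    obtain ⟨z', hz', b₂, hb₂, hzeq⟩ := Set.mem_add.mp (hG xb hxbUG x hxUG hmem)
    rw [mem_closedBall_zero_iff] at hb₂
    have hb₂' : ‖b₂‖ ≤ m * r := by
      have h8 : ‖xb - x‖ < a := by
        rw [← dist_eq_norm, dist_comm]; exact mem_ball.mp hx
      exact le_trans hb₂ (mul_le_mul_of_nonneg_left (le_of_lt (lt_of_lt_of_le h8 har)) hm.le)
    -- -z' = yb + b₂
    have hzval : -z' = yb + b₂ := by
      have h9 : z' = -yb - b₂ := by rw [← hzeq]; abel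
      rw [h9]; abel
    have hzWR : -z' ∈ WR := by
      apply hbWR
      rw [mem_ball, dist_eq_norm, hzval]
      have : yb + b₂ - yb = b₂ := by abel
      rw [this]
      calc ‖b₂‖ ≤ m * r := hb₂'
        _ ≤ ρ / 2 := hr_m
        _ < ρ := by linarith
    have hreg := hR x hxUR p hpVR (-z') hzWR
    have hd : EMetric.infEdist (-z') (F (x, p)) ≤ ENNReal.ofReal (m * r + ε₁) := by
      calc EMetric.infEdist (-z') (F (x, p)) ≤ edist (-z') y :=
            EMetric.infEdist_le_edist_of_mem hyF
        _ = ENNReal.ofReal ‖-z' - y‖ := by rw [edist_dist, dist_eq_norm]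
        _ ≤ ENNReal.ofReal (m * r + ε₁) := by
            apply ENNReal.ofReal_le_ofReal
            have h1 : ‖-z' - y‖ ≤ ‖b₂‖ + ‖yb - y‖ := by
              have : -z' - y = b₂ + (yb - y) := by rw [hzval]; abel
              rw [this]; exact norm_add_le _ _
            have h2 : ‖yb - y‖ < ε₁ := by
              rw [← dist_eq_norm, dist_comm]; exact mem_ball.mp hyb
            linarith
    calc EMetric.infEdist p {q | x ∈ S q}
        ≤ EMetric.infEdist p {q : P | -z' ∈ F (x, q)} :=
          EMetric.infEdist_anti (hsub z' hz')
      _ ≤ ENNReal.ofReal k * EMetric.infEdist (-z') (F (x, p)) := hreg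
      _ ≤ ENNReal.ofReal k * ENNReal.ofReal (m * r + ε₁) := by
          exact mul_le_mul_right hd _
      _ = ENNReal.ofReal (k * (m * r + ε₁)) := by
          rw [ENNReal.ofReal_mul hk.le]
      _ ≤ ENNReal.ofReal (κ * r) := ENNReal.ofReal_le_ofReal harith
      _ = ENNReal.ofReal κ * ENNReal.ofReal r := ENNReal.ofReal_mul hκ0.le
      _ ≤ ENNReal.ofReal κ * EMetric.infEdist x (S p) := mul_le_mul_right hcase _
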